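/- arXiv:1303.0074 — 3 statements merged into one kernel-verified Lean document; each statement's English description precedes it below -/
import Mathlib

section
/- Let n ≥ 2, m ≥ 1 and 1 ≤ j ≤ m. Define the conjugate-ℂ-linear map β : 𝔭 → W_j by β(ξ_v) = v̄_2 · e_1^j e_{n+1}^{m−j} − v̄_1 · (e_1^{j−1} e_2) e_{n+1}^{m−j}. Then ρ_m(ξ_{e_2}^-) β(ξ_{e_1}) ≠ ρ_m(ξ_{e_1}^-) β(ξ_{e_2}); in particular β does not satisfy the symmetry relation ρ_m(ξ_u^-)β(ξ_v) = ρ_m(ξ_v^-)β(ξ_u) for all u, v. -/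
open MvPolynomial

noncomputable section

/-- The matrix `ξ_v⁺ = [[0, v],[0, 0]]` in block form. -/
def xiP (n : ℕ) (v : Fin n → ℂ) : Matrix (Fin (n+1)) (Fin (n+1)) ℂ :=
  Matrix.of fun i j => if h : (i : ℕ) < n ∧ j = Fin.last n then v ⟨i, h.1⟩ else 0

/-- The matrix `ξ_v⁻ = [[0, 0],[v*, 0]]` in block form. -/
def xiM (n : ℕ) (v : Fin n → ℂ) : Matrix (Fin (n+1)) (Fin (n+1)) ℂ :=
  Matrix.of fun i j =>
    if h : i = Fin.last n ∧ (j : ℕ) < n then (starRingEnd ℂ) (v ⟨j, h.2⟩) else 0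

/-- The matrix `ξ_v = [[0, v],[v*, 0]]` in block form. -/
def xi (n : ℕ) (v : Fin n → ℂ) : Matrix (Fin (n+1)) (Fin (n+1)) ℂ := xiP n v + xiM n v

/-- The derived representation of `gl(n+1, ℂ)` on `W = S^m(ℂ^{n+1})`, realized on
the polynomial ring `ℂ[x_1, …, x_{n+1}]` (a vector `v` corresponds to the linear
form `Σ v_i x_i` and the symmetric product to the product of polynomials, so that
`(u+w)^j = Σ binom(j,i) u^i w^{j-i}`); it acts by derivations. -/
def rho (n : ℕ) (M : Matrix (Fin (n+1)) (Fin (n+1)) ℂ) :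
    MvPolynomial (Fin (n+1)) ℂ →ₗ[ℂ] MvPolynomial (Fin (n+1)) ℂ :=
  ∑ i, ∑ j, M j i • ((LinearMap.mulLeft ℂ (X j)) ∘ₗ (pderiv i).toLinearMap)

/-- The component `W_k = S^k(V_1)·e_{n+1}^{m-k}` of `W = S^m(ℂ^{n+1})`: the span of
monomials of total degree `m` with degree `m - k` in the last variable. -/
def Wcomp (n m k : ℕ) : Submodule ℂ (MvPolynomial (Fin (n+1)) ℂ) :=
  Submodule.span ℂ {p | ∃ d : Fin (n+1) →₀ ℕ,
    (∑ i, d i) = m ∧ d (Fin.last n) = m - k ∧ p = monomial d 1}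

lemma rho_xiM_single_apply (n : ℕ) (a : Fin n) (p : MvPolynomial (Fin (n+1)) ℂ) :
    rho n (xiM n (Pi.single a 1)) p = X (Fin.last n) * pderiv (Fin.castSucc a) p := by
  unfold rho xiM
  simp only [LinearMap.sum_apply, LinearMap.smul_apply, LinearMap.coe_comp,
    Function.comp_apply, LinearMap.mulLeft_apply, Matrix.of_apply,
    Derivation.coeFn_coe]
  rw [Finset.sum_eq_single (Fin.castSucc a)]
  · rw [Finset.sum_eq_single (Fin.last n)]
    · have h1 : ((Fin.castSucc a : Fin (n+1)) : ℕ) < n := a.isLt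
      rw [dif_pos ⟨rfl, h1⟩]
      have : (⟨(Fin.castSucc a : Fin (n+1)), h1⟩ : Fin n) = a := by ext; simp
      rw [this]; simp
    · intro b _ hb
      rw [dif_neg (by tauto)]; simp
    · simp
  · intro b _ hb
    rw [Finset.sum_eq_zero]
    intro c _
    by_cases hc : c = Fin.last n ∧ (b : ℕ) < n
    · rw [dif_pos hc]
      have : (⟨(b : ℕ), hc.2⟩ : Fin n) ≠ a := by
        intro h; apply hb; rw [← h]; ext; simp
      rw [Pi.single_eq_of_ne this]; simp
    · rw [dif_neg hc]; simp
  · simp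

/-- The highest weight vector `β(ξ_v) = v̄_2 · e_1^j e_{n+1}^{m-j} - v̄_1 ·
(e_1^{j-1}e_2) e_{n+1}^{m-j}` of the complementary component does not satisfy the
symmetry relation: `ρ_m(ξ_{e_2}⁻)β(ξ_{e_1}) ≠ ρ_m(ξ_{e_1}⁻)β(ξ_{e_2})`. -/
theorem highest_weight_vector_not_symmetric (n m j : ℕ)
    (hn : 2 ≤ n) (hm : 1 ≤ m) (hj : 1 ≤ j) (hjm : j ≤ m)
    (β : (Fin n → ℂ) → MvPolynomial (Fin (n+1)) ℂ)
    (hβ : ∀ v, β v =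
        (starRingEnd ℂ) (v ⟨1, by omega⟩) •
            (X (0 : Fin (n+1)) ^ j * X (Fin.last n) ^ (m - j))
          - (starRingEnd ℂ) (v ⟨0, by omega⟩) •
              (X (0 : Fin (n+1)) ^ (j - 1) * X (⟨1, by omega⟩ : Fin (n+1)) *
                X (Fin.last n) ^ (m - j))) :
    rho n (xiM n (Pi.single ⟨1, by omega⟩ 1)) (β (Pi.single ⟨0, by omega⟩ 1))
        ≠ rho n (xiM n (Pi.single ⟨0, by omega⟩ 1)) (β (Pi.single ⟨1, by omega⟩ 1))
    ∧ ¬ (∀ u v, rho n (xiM n u) (β v) = rho n (xiM n v) (β u)) := by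
  have key : rho n (xiM n (Pi.single ⟨1, by omega⟩ 1)) (β (Pi.single ⟨0, by omega⟩ 1))
      ≠ rho n (xiM n (Pi.single ⟨0, by omega⟩ 1)) (β (Pi.single ⟨1, by omega⟩ 1)) := by
    have h01 : (⟨1, by omega⟩ : Fin n) ≠ ⟨0, by omega⟩ := by simp [Fin.ext_iff]
    have h10 : (⟨0, by omega⟩ : Fin n) ≠ ⟨1, by omega⟩ := by simp [Fin.ext_iff]
    have e0 : β (Pi.single (⟨0, by omega⟩ : Fin n) 1) =
        -(X (0 : Fin (n+1)) ^ (j - 1) * X (⟨1, by omega⟩ : Fin (n+1)) *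
          X (Fin.last n) ^ (m - j)) := by
      rw [hβ, Pi.single_eq_of_ne h01, Pi.single_eq_same]; simp
    have e1 : β (Pi.single (⟨1, by omega⟩ : Fin n) 1) =
        X (0 : Fin (n+1)) ^ j * X (Fin.last n) ^ (m - j) := by
      rw [hβ, Pi.single_eq_of_ne h10, Pi.single_eq_same]; simp
    rw [rho_xiM_single_apply, rho_xiM_single_apply, e0, e1]
    have c1 : Fin.castSucc (⟨1, by omega⟩ : Fin n) = (⟨1, by omega⟩ : Fin (n+1)) := rfl
    have c0 : Fin.castSucc (⟨0, by omega⟩ : Fin n) = (0 : Fin (n+1)) := rfl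
    rw [c1, c0]
    have hne1 : (0 : Fin (n+1)) ≠ (⟨1, by omega⟩ : Fin (n+1)) := by simp [Fin.ext_iff]
    have hne2 : Fin.last n ≠ (⟨1, by omega⟩ : Fin (n+1)) := by
      simp [Fin.ext_iff, Fin.last]; omega
    have hne3 : (⟨1, by omega⟩ : Fin (n+1)) ≠ (0 : Fin (n+1)) := by simp [Fin.ext_iff]
    have hne4 : Fin.last n ≠ (0 : Fin (n+1)) := by simp [Fin.ext_iff, Fin.last]; omega
    intro h
    have h2 := congrArg (eval (fun _ => (1 : ℂ))) h
    simp only [map_neg, map_mul, pderiv_mul, pderiv_pow, pderiv_X_self,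
      pderiv_X_of_ne hne1, pderiv_X_of_ne hne2, pderiv_X_of_ne hne3,
      pderiv_X_of_ne hne4, mul_zero, zero_mul, add_zero, zero_add, mul_one,
      eval_mul, eval_pow, eval_X, eval_neg, one_pow, one_mul,
      mul_zero, smul_eq_mul, map_natCast] at h2
    have hcast : ((j + 1 : ℕ) : ℂ) = 0 := by push_cast; linear_combination -h2
    exact absurd (Nat.cast_eq_zero.mp hcast) (by omega)
  exact ⟨key, fun hall => key (hall _ _)⟩

end
end

section
/- Let n > 1 and m ≥ 1. Suppose α : 𝔭 → W = S^m(ℂ^{n+1}) is an ℝ-linear map satisfying (i) ρ_m(ξ_u)α(ξ_v) = ρ_m(ξ_v)α(ξ_u) for all u, v ∈ ℂⁿ, and (ii) Σ_{j=1}^n ( ρ_m(ξ_{e_j})α(ξ_{e_j}) + ρ_m(ξ_{i e_j})α(ξ_{i e_j}) ) = 0. Then the W_0-component of α vanishes: P_0(α(ξ_v)) = 0 for all v ∈ ℂⁿ. -/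
open MvPolynomial

noncomputable section

lemma rho_add' (n : ℕ) (A B : Matrix (Fin (n+1)) (Fin (n+1)) ℂ) :
    rho n (A + B) = rho n A + rho n B := by
  simp [rho, Matrix.add_apply, add_smul, Finset.sum_add_distrib]

lemma rho_smul' (n : ℕ) (c : ℂ) (A : Matrix (Fin (n+1)) (Fin (n+1)) ℂ) :
    rho n (c • A) = c • rho n A := by
  simp [rho, Matrix.smul_apply, smul_smul, Finset.smul_sum]

lemma xiM_I (n : ℕ) (v : Fin n → ℂ) :
    xiM n (Complex.I • v) = (-Complex.I) • xiM n v := by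
  ext i j
  simp only [xiM, Matrix.of_apply, Matrix.smul_apply]
  split
  · simp [Complex.conj_I]
  · simp

lemma coeff_pderiv' {σ : Type*} [DecidableEq σ] (i : σ) (d : σ →₀ ℕ) (p : MvPolynomial σ ℂ) :
    coeff d (pderiv i p) = ((d i : ℂ) + 1) * coeff (d + Finsupp.single i 1) p := by
  induction p using MvPolynomial.induction_on' with
  | monomial s a =>
    rw [pderiv_monomial, coeff_monomial, coeff_monomial]
    by_cases h : s = d + Finsupp.single i 1
    · subst h
      have h1 : d + Finsupp.single i 1 - Finsupp.single i 1 = d := add_tsub_cancel_right _ _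
      have h2 : (d + Finsupp.single i 1 : σ →₀ ℕ) i = d i + 1 := by
        rw [Finsupp.add_apply, Finsupp.single_apply, if_pos rfl]
      rw [if_pos h1, if_pos rfl, h2]
      push_cast; ring
    · rw [if_neg h, mul_zero]
      by_cases h2 : s - Finsupp.single i 1 = d
      · rw [if_pos h2]
        by_cases h3 : s i = 0
        · simp [h3]
        · exfalso; apply h
          ext j
          have hthis := DFunLike.congr_fun h2 j
          rw [Finsupp.tsub_apply] at hthis
          rw [Finsupp.add_apply, Finsupp.single_apply]
          by_cases hj : i = j
          · subst hj
            rw [if_pos rfl]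
            rw [Finsupp.single_apply, if_pos rfl] at hthis
            omega
          · rw [if_neg hj]
            rw [Finsupp.single_apply, if_neg hj] at hthis
            omega
      · rw [if_neg h2]
  | add p q hp hq => simp [hp, hq, mul_add]

lemma coeff_rho_xiP (n m : ℕ) (hm : 1 ≤ m) (k : Fin n) (u : Fin n → ℂ)
    (p : MvPolynomial (Fin (n+1)) ℂ) :
    coeff (Finsupp.single (Fin.last n) (m-1) + Finsupp.single (Fin.castSucc k) 1)
      (rho n (xiP n u) p)
    = m * u k * coeff (Finsupp.single (Fin.last n) m) p := by
  set D : Fin (n+1) →₀ ℕ :=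
    Finsupp.single (Fin.last n) (m-1) + Finsupp.single (Fin.castSucc k) 1 with hD
  have hkn : ((Fin.castSucc k : Fin (n+1)) : ℕ) < n := by simp [Fin.coe_castSucc, k.is_lt]
  have hkl : (Fin.castSucc k : Fin (n+1)) ≠ Fin.last n := Fin.ne_of_lt (Fin.castSucc_lt_last k)
  have step1 : coeff D (rho n (xiP n u) p)
      = ∑ i : Fin (n+1), ∑ j : Fin (n+1), (xiP n u) j i * coeff D (X j * pderiv i p) := by
    simp [rho, LinearMap.sum_apply, LinearMap.smul_apply, LinearMap.comp_apply,
      LinearMap.mulLeft_apply, coeff_sum, coeff_smul, smul_eq_mul]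
  rw [step1]
  rw [Finset.sum_eq_single (Fin.last n)]
  · rw [Finset.sum_eq_single (Fin.castSucc k)]
    · have hent : (xiP n u) (Fin.castSucc k) (Fin.last n) = u k := by
        simp [xiP, hkn]
      rw [hent]
      have hmem : (Fin.castSucc k : Fin (n+1)) ∈ D.support := by
        rw [Finsupp.mem_support_iff, hD, Finsupp.add_apply, Finsupp.single_apply,
          Finsupp.single_apply, if_neg (Ne.symm hkl), if_pos rfl]
        omega
      rw [coeff_X_mul', if_pos hmem]
      have hsub : D - Finsupp.single (Fin.castSucc k) 1 = Finsupp.single (Fin.last n) (m-1) := by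
        rw [hD]; exact add_tsub_cancel_right _ _
      rw [hsub, coeff_pderiv']
      have hsingle : Finsupp.single (Fin.last n) (m-1) + Finsupp.single (Fin.last n) 1
          = Finsupp.single (Fin.last n) m := by
        rw [← Finsupp.single_add]
        congr 1
        omega
      rw [hsingle, Finsupp.single_apply, if_pos rfl]
      have : (((m-1 : ℕ) : ℂ) + 1) = (m : ℂ) := by
        rw [Nat.cast_sub hm]
        push_cast
        ring
      rw [this]
      ring
    · intro j _ hj
      by_cases hjn : (j : ℕ) < n
      · have hzero : coeff D (X j * pderiv (Fin.last n) p) = 0 := by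
          rw [coeff_X_mul', if_neg]
          rw [Finsupp.mem_support_iff, hD]
          have hjl : j ≠ Fin.last n := by
            intro h; rw [h] at hjn; simp at hjn
          simp only [ne_eq, not_not]
          rw [Finsupp.add_apply, Finsupp.single_apply, Finsupp.single_apply,
            if_neg (Ne.symm hjl), if_neg (Ne.symm hj)]
          simp
        rw [hzero, mul_zero]
      · have : (xiP n u) j (Fin.last n) = 0 := by simp [xiP, hjn]
        rw [this, zero_mul]
    · intro h; exact absurd (Finset.mem_univ _) h
  · intro i _ hi
    apply Finset.sum_eq_zero
    intro j _
    have : (xiP n u) j i = 0 := by simp [xiP, hi]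
    rw [this, zero_mul]
  · intro h; exact absurd (Finset.mem_univ _) h

/-- If `α : 𝔭 → W = S^m(ℂ^{n+1})` is ℝ-linear, symmetric and trace free, then its
`W_0`-component vanishes: the coefficient of the monomial `e_{n+1}^m` in `α(ξ_v)`
is zero for every `v`. -/
theorem bottom_component_vanishes (n m : ℕ) (hn : 1 < n) (hm : 1 ≤ m)
    (α : (Fin n → ℂ) → MvPolynomial (Fin (n+1)) ℂ)
    (hW : ∀ v, α v ∈ homogeneousSubmodule (Fin (n+1)) ℂ m)
    (hadd : ∀ u v, α (u + v) = α u + α v)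
    (hsmul : ∀ (r : ℝ) (v : Fin n → ℂ), α ((r : ℂ) • v) = (r : ℂ) • α v)
    (hsym : ∀ u v, rho n (xi n u) (α v) = rho n (xi n v) (α u))
    (htr : ∑ j : Fin n,
        (rho n (xi n (Pi.single j 1)) (α (Pi.single j 1))
          + rho n (xi n (Pi.single j Complex.I)) (α (Pi.single j Complex.I))) = 0) :
    ∀ v, coeff (Finsupp.single (Fin.last n) m) (α v) = 0 := by
  classical
  have hm0 : (m : ℂ) ≠ 0 := Nat.cast_ne_zero.mpr (by omega)
  set F : (Fin n → ℂ) → ℂ := fun v => coeff (Finsupp.single (Fin.last n) m) (α v) with hF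
  set D : Fin n → (Fin (n+1) →₀ ℕ) :=
    fun k => Finsupp.single (Fin.last n) (m-1) + Finsupp.single (Fin.castSucc k) 1 with hDdef
  set ψ : Fin n → (Fin n → ℂ) → (Fin n → ℂ) → ℂ :=
    fun k u w => coeff (D k) (rho n (xiM n u) (α w)) with hψ
  have K1 : ∀ (k : Fin n) (u w : Fin n → ℂ),
      coeff (D k) (rho n (xi n u) (α w)) = m * u k * F w + ψ k u w := by
    intro k u w
    have : xi n u = xiP n u + xiM n u := rfl
    rw [this, rho_add', LinearMap.add_apply, coeff_add, coeff_rho_xiP n m hm]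
  have K2 : ∀ (k j : Fin n) (w : Fin n → ℂ),
      ψ k (Pi.single j Complex.I) w = -Complex.I * ψ k (Pi.single j 1) w := by
    intro k j w
    have hsI : (Pi.single j Complex.I : Fin n → ℂ) = Complex.I • (Pi.single j 1 : Fin n → ℂ) := by
      rw [← Pi.single_smul, smul_eq_mul, mul_one]
    rw [hsI]
    simp only [hψ]
    rw [xiM_I, rho_smul', LinearMap.smul_apply, coeff_smul, smul_eq_mul]
  have S : ∀ (k : Fin n) (u v : Fin n → ℂ),
      m * u k * F v + ψ k u v = m * v k * F u + ψ k v u := by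
    intro k u v
    rw [← K1, ← K1, hsym]
  -- Trace relation
  have T : ∀ k : Fin n, F (Pi.single k 1) = -Complex.I * F (Pi.single k Complex.I) := by
    intro k
    have h0 := congrArg (coeff (D k)) htr
    rw [coeff_sum, coeff_zero] at h0
    have hterm : ∀ j : Fin n,
        coeff (D k) (rho n (xi n (Pi.single j 1)) (α (Pi.single j 1))
          + rho n (xi n (Pi.single j Complex.I)) (α (Pi.single j Complex.I)))
        = m * (Pi.single j 1 : Fin n → ℂ) k * F (Pi.single j 1) + ψ k (Pi.single j 1) (Pi.single j 1)
          + (m * (Pi.single j Complex.I : Fin n → ℂ) k * F (Pi.single j Complex.I)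
            + ψ k (Pi.single j Complex.I) (Pi.single j Complex.I)) := by
      intro j
      rw [coeff_add, K1, K1]
    rw [Finset.sum_congr rfl (fun j _ => hterm j)] at h0
    rw [Finset.sum_eq_single k] at h0
    · -- j = k term
      have hS := S k (Pi.single k 1) (Pi.single k Complex.I)
      rw [Pi.single_eq_same, Pi.single_eq_same] at h0 hS
      rw [K2 k k] at h0 hS
      -- h0 : m * 1 * F ek + ψ ek ek + (m * I * F fk + (-I) * ψ ek fk) = 0
      -- hS : m * 1 * F fk + ψ ek fk = m * I * F ek + (-I) * ψ ek ek
      have hkey : 2 * (m : ℂ) * (F (Pi.single k 1) + Complex.I * F (Pi.single k Complex.I)) = 0 := by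
        linear_combination h0 + Complex.I * hS
          - (ψ k (Pi.single k 1) (Pi.single k 1)) * Complex.I_mul_I
          + ((m : ℂ) * F (Pi.single k 1)) * Complex.I_mul_I
      have h2 : (2 : ℂ) * m ≠ 0 := by
        simp [hm0]
      have := mul_eq_zero.mp hkey
      rcases this with h | h
      · exact absurd h h2
      · linear_combination h
    · intro j _ hjk
      have he : (Pi.single j 1 : Fin n → ℂ) k = 0 := Pi.single_eq_of_ne (Ne.symm hjk) 1
      have hf : (Pi.single j Complex.I : Fin n → ℂ) k = 0 := Pi.single_eq_of_ne (Ne.symm hjk) _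
      have hS := S k (Pi.single j 1) (Pi.single j Complex.I)
      rw [he, hf] at hS ⊢
      rw [K2 k j] at hS ⊢
      -- hS : m*0*F fj + ψ ej fj = m*0*F ej + (-I) ψ ej ej
      linear_combination hS * (-Complex.I)
        + (ψ k (Pi.single j 1) (Pi.single j 1)) * Complex.I_mul_I
    · intro h; exact absurd (Finset.mem_univ _) h
  -- Relation from n > 1
  have N : ∀ l : Fin n, F (Pi.single l 1) = Complex.I * F (Pi.single l Complex.I) := by
    intro l
    obtain ⟨k, hkl⟩ : ∃ k : Fin n, k ≠ l := by
      haveI : Nontrivial (Fin n) :=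
        ⟨⟨⟨0, by omega⟩, ⟨1, by omega⟩, by simp [Fin.ext_iff]⟩⟩
      exact exists_ne l
    have hlk : l ≠ k := Ne.symm hkl
    have h1 := S k (Pi.single l 1) (Pi.single k 1)
    have h2 := S k (Pi.single l 1) (Pi.single k Complex.I)
    have h3 := S k (Pi.single l Complex.I) (Pi.single k 1)
    have h4 := S k (Pi.single l Complex.I) (Pi.single k Complex.I)
    have hl1 : (Pi.single l 1 : Fin n → ℂ) k = 0 := Pi.single_eq_of_ne hkl 1
    have hlI : (Pi.single l Complex.I : Fin n → ℂ) k = 0 := Pi.single_eq_of_ne hkl _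
    rw [hl1, Pi.single_eq_same] at h1 h2
    rw [hlI, Pi.single_eq_same] at h3 h4
    rw [K2 k l] at h3 h4
    rw [K2 k k] at h2 h4
    have hkey : 2 * (m : ℂ) * (F (Pi.single l 1) - Complex.I * F (Pi.single l Complex.I)) = 0 := by
      linear_combination -h1 + Complex.I * h2 + Complex.I * h3 + h4
        + ((m : ℂ) * F (Pi.single l 1) + ψ k (Pi.single l 1) (Pi.single k 1)
          - ψ k (Pi.single k 1) (Pi.single l 1)) * Complex.I_mul_I
    have h2m : (2 : ℂ) * m ≠ 0 := by simp [hm0]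
    rcases mul_eq_zero.mp hkey with h | h
    · exact absurd h h2m
    · linear_combination h
  -- Conclude basis values vanish
  have hFe : ∀ l : Fin n, F (Pi.single l 1) = 0 := by
    intro l
    have hT := T l
    have hN := N l
    have : (2 : ℂ) * Complex.I * F (Pi.single l Complex.I) = 0 := by
      linear_combination hT - hN
    have hI : (2 : ℂ) * Complex.I ≠ 0 := by
      simp [Complex.I_ne_zero]
    rcases mul_eq_zero.mp this with h | h
    · exact absurd h hI
    · rw [hN, h, mul_zero]
  have hFf : ∀ l : Fin n, F (Pi.single l Complex.I) = 0 := by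
    intro l
    have hT := T l
    rw [hFe l] at hT
    rcases mul_eq_zero.mp hT.symm with h | h
    · exact absurd (neg_eq_zero.mp h) Complex.I_ne_zero
    · exact h
  -- additivity over sums
  have hα0 : α 0 = 0 := by
    have h := hadd 0 0
    rw [add_zero] at h
    exact (add_eq_right.mp h.symm)
  have hαsum : ∀ (s : Finset (Fin n)) (f : Fin n → (Fin n → ℂ)),
      α (∑ j ∈ s, f j) = ∑ j ∈ s, α (f j) := by
    intro s f
    induction s using Finset.induction_on with
    | empty => simpa using hα0
    | @insert a s h ih => rw [Finset.sum_insert h, Finset.sum_insert h, hadd, ih]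
  intro v
  have hv : v = ∑ j : Fin n,
      (((v j).re : ℂ) • (Pi.single j 1 : Fin n → ℂ)
        + ((v j).im : ℂ) • (Pi.single j Complex.I : Fin n → ℂ)) := by
    ext t
    rw [Finset.sum_apply]
    rw [Finset.sum_eq_single t]
    · simp only [Pi.add_apply, Pi.smul_apply, Pi.single_eq_same, smul_eq_mul, mul_one]
      exact (Complex.re_add_im (v t)).symm
    · intro j _ hjt
      simp [Pi.single_eq_of_ne (Ne.symm hjt)]
    · intro h; exact absurd (Finset.mem_univ _) h
  show F v = 0
  rw [hv]
  simp only [hF]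
  rw [hαsum, coeff_sum]
  apply Finset.sum_eq_zero
  intro j _
  rw [hadd, hsmul, hsmul, coeff_add, coeff_smul, coeff_smul]
  have e1 : coeff (Finsupp.single (Fin.last n) m) (α (Pi.single j 1)) = 0 := hFe j
  have e2 : coeff (Finsupp.single (Fin.last n) m) (α (Pi.single j Complex.I)) = 0 := hFf j
  rw [e1, e2]
  simp

end
end

section
/- Let m ≥ 1 and 1 ≤ k ≤ m. Suppose γ : 𝔭 → W_k is an ℝ-linear map satisfying ρ_m(ξ_u^-)γ(ξ_v) = ρ_m(ξ_v^-)γ(ξ_u) for all u, v ∈ ℂⁿ. Then γ is conjugate-ℂ-linear: γ(ξ_{iv}) = −i·γ(ξ_v) for all v ∈ ℂⁿ. -/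
open MvPolynomial

noncomputable section

lemma rho_smul_mat (n : ℕ) (c : ℂ) (M : Matrix (Fin (n+1)) (Fin (n+1)) ℂ) :
    rho n (c • M) = c • rho n M := by
  simp [rho, Finset.smul_sum, smul_smul]

lemma rho_xiM_apply (n : ℕ) (u : Fin n → ℂ) (p : MvPolynomial (Fin (n+1)) ℂ) :
    rho n (xiM n u) p
      = ∑ a : Fin n, (starRingEnd ℂ) (u a) • (X (Fin.last n) * pderiv (Fin.castSucc a) p) := by
  have expand : rho n (xiM n u) p
      = ∑ i, ∑ j, xiM n u j i • (X j * pderiv i p) := by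
    simp [rho, LinearMap.sum_apply]
  rw [expand]
  have inner : ∀ i : Fin (n+1), (∑ j, xiM n u j i • (X j * pderiv i p))
      = (if h : (i : ℕ) < n then
          (starRingEnd ℂ) (u ⟨i, h⟩) • (X (Fin.last n) * pderiv i p) else 0) := by
    intro i
    rw [Finset.sum_eq_single (Fin.last n)]
    · by_cases h : (i : ℕ) < n
      · simp [xiM, h]
      · simp [xiM, h]
    · intro j _ hj
      simp [xiM, hj]
    · simp
  simp_rw [inner]
  rw [Fin.sum_univ_castSucc]
  have hlast : ¬ ((Fin.last n : Fin (n+1)) : ℕ) < n := by simp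
  rw [dif_neg hlast, add_zero]
  refine Finset.sum_congr rfl fun a _ => ?_
  have ha : ((Fin.castSucc a : Fin (n+1)) : ℕ) < n := by simp [a.is_lt]
  rw [dif_pos ha]
  congr 1

lemma euler_op (n m k : ℕ) (hkm : k ≤ m) (p : MvPolynomial (Fin (n+1)) ℂ) (hp : p ∈ Wcomp n m k) :
    ∑ a : Fin n, X (Fin.castSucc a) * pderiv (Fin.castSucc a) p = (k : ℂ) • p := by
  induction hp using Submodule.span_induction with
  | mem x hx =>
    obtain ⟨d, hd1, hd2, rfl⟩ := hx
    have key : ∀ j : Fin (n+1),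
        X j * pderiv j (monomial d (1 : ℂ)) = ((d j : ℂ)) • monomial d 1 := by
      intro j
      rw [pderiv_monomial, one_mul]
      by_cases h : d j = 0
      · simp [h]
      · have hdd : d - Finsupp.single j 1 + Finsupp.single j 1 = d := by
          ext a
          rcases eq_or_ne a j with rfl | hne
          · simp [Finsupp.single_apply]
            omega
          · simp [Finsupp.single_apply, hne.symm]
        calc X j * monomial (d - Finsupp.single j 1) ((d j : ℂ))
            = X j ^ 1 * monomial (d - Finsupp.single j 1) ((d j : ℂ)) := by rw [pow_one]
          _ = monomial (Finsupp.single j 1 + (d - Finsupp.single j 1)) ((d j : ℂ)) := by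
              rw [monomial_single_add]
          _ = ((d j : ℂ)) • monomial d 1 := by
              have hcomm : Finsupp.single j 1 + (d - Finsupp.single j 1) = d :=
                (add_comm _ _).trans hdd
              rw [hcomm, smul_monomial, smul_eq_mul, mul_one]
    simp_rw [key]
    rw [← Finset.sum_smul]
    congr 1
    have hsum : ∑ a : Fin n, d (Fin.castSucc a) = k := by
      rw [Fin.sum_univ_castSucc, hd2] at hd1
      omega
    rw [← Nat.cast_sum, hsum]
  | zero => simp
  | add x y _ _ hx hy =>
    simp only [map_add, mul_add, Finset.sum_add_distrib, hx, hy, smul_add]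
  | smul c x _ hx =>
    have : ∀ a : Fin n, X (Fin.castSucc a) * pderiv (Fin.castSucc a) (c • x)
        = c • (X (Fin.castSucc a) * pderiv (Fin.castSucc a) x) := by
      intro a
      rw [Derivation.map_smul, mul_smul_comm]
    simp_rw [this]
    rw [← Finset.smul_sum, hx, smul_comm]

/-- If `γ : 𝔭 → W_k` (with `1 ≤ k ≤ m`) is ℝ-linear and satisfies
`ρ_m(ξ_u⁻)γ(ξ_v) = ρ_m(ξ_v⁻)γ(ξ_u)` for all `u, v`, then `γ` is
conjugate-ℂ-linear. -/
theorem minus_symmetry_implies_conjugate_linear (n m k : ℕ)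
    (hm : 1 ≤ m) (hk : 1 ≤ k) (hkm : k ≤ m)
    (γ : (Fin n → ℂ) → MvPolynomial (Fin (n+1)) ℂ)
    (hadd : ∀ u v, γ (u + v) = γ u + γ v)
    (hsmul : ∀ (r : ℝ) (v : Fin n → ℂ), γ ((r : ℂ) • v) = (r : ℂ) • γ v)
    (hWk : ∀ v, γ v ∈ Wcomp n m k)
    (hsym : ∀ u v, rho n (xiM n u) (γ v) = rho n (xiM n v) (γ u)) :
    ∀ v, γ (Complex.I • v) = (-Complex.I) • γ v := by
  intro v
  set δ : MvPolynomial (Fin (n+1)) ℂ := γ (Complex.I • v) + Complex.I • γ v with hδ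
  have hδW : δ ∈ Wcomp n m k :=
    (Wcomp n m k).add_mem (hWk _) ((Wcomp n m k).smul_mem _ (hWk v))
  have hδr : ∀ u, rho n (xiM n u) δ = 0 := by
    intro u
    have h1 : rho n (xiM n u) (γ (Complex.I • v))
        = (-Complex.I) • rho n (xiM n u) (γ v) := by
      rw [hsym u (Complex.I • v), xiM_I, rho_smul_mat, LinearMap.smul_apply, hsym v u]
    rw [hδ, map_add, map_smul, h1, ← add_smul]
    simp
  have hδd : ∀ a : Fin n, pderiv (Fin.castSucc a) δ = 0 := by
    intro a
    have h := hδr (Pi.single a 1)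
    rw [rho_xiM_apply] at h
    rw [Finset.sum_eq_single a] at h
    · rw [Pi.single_eq_same, map_one, one_smul] at h
      rcases mul_eq_zero.mp h with h' | h'
      · exact absurd h' (X_ne_zero _)
      · exact h'
    · intro b _ hb
      simp [Pi.single_eq_of_ne hb]
    · simp
  have heuler := euler_op n m k hkm δ hδW
  have h0 : (k : ℂ) • δ = 0 := by
    rw [← heuler]
    refine Finset.sum_eq_zero fun a _ => ?_
    rw [hδd a, mul_zero]
  have hkc : (k : ℂ) ≠ 0 := Nat.cast_ne_zero.mpr (by omega)
  have hδ0 : δ = 0 := by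
    rcases smul_eq_zero.mp h0 with h' | h'
    · exact absurd h' hkc
    · exact h'
  have := hδ0
  rw [hδ] at this
  have h2 : γ (Complex.I • v) = -(Complex.I • γ v) :=
    eq_neg_of_add_eq_zero_left this
  rw [h2, neg_smul]

end
end
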